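/- For every integer k ≥ 5, the complex number (e^{2πi·(k−1)!/k} − 1)/(e^{−2πi·(1/k)} − 1) equals 1 if k is prime and equals 0 if k is not prime. (For prime k this follows since (k−1)! ≡ −1 (mod k) by Wilson's theorem, so e^{2πi(k−1)!/k} = e^{−2πi/k}; for composite k ≥ 5 one has k ∣ (k−1)!, so the numerator vanishes.) -/

import Mathlib

/-- A composite `k ≥ 5` divides `(k-1)!`. -/
lemma composite_dvd_pred_factorial (k : ℕ) (hk : 5 ≤ k) (hp : ¬ Nat.Prime k) :
    k ∣ Nat.factorial (k - 1) := by
  obtain ⟨m, hm1, hm2, hm3⟩ := Nat.exists_dvd_of_not_prime2 (by omega) hp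
  obtain ⟨c, hc⟩ := hm1
  rcases eq_or_ne m c with rfl | hne
  · -- k = m * m, with m ≥ 3 since k ≥ 5
    have hm3' : 3 ≤ m := by nlinarith
    have h1 : m * (2 * m) ∣ Nat.factorial (2 * m) := by
      have : m ∣ Nat.factorial (2 * m - 1) :=
        Nat.dvd_factorial (by omega) (by omega)
      have h2 : Nat.factorial (2 * m) = (2 * m) * Nat.factorial (2 * m - 1) := by
        conv_lhs => rw [show 2 * m = (2 * m - 1) + 1 by omega]
        rw [Nat.factorial_succ]
        congr 1
        omega
      rw [h2, mul_comm m (2 * m)]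
      exact mul_dvd_mul_left _ this
    have h3 : k ∣ m * (2 * m) := ⟨2, by rw [hc]; ring⟩
    have h4 : Nat.factorial (2 * m) ∣ Nat.factorial (k - 1) :=
      Nat.factorial_dvd_factorial (by have : 2 * m + 1 ≤ k := by nlinarith
                                      omega)
    exact h3.trans (h1.trans h4)
  · -- k = m * c with m ≠ c, both between 2 and k-1
    have hc2 : 2 ≤ c := by nlinarith
    have hck : c < k := by nlinarith
    -- wlog assume m < c or c < m; handle via max
    have key : ∀ a b : ℕ, a < b → 2 ≤ a → b < k → m * c = a * b →
        k ∣ Nat.factorial (k - 1) := by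
      intro a b hab ha2 hbk heq
      have h1 : a ∣ Nat.factorial (b - 1) := Nat.dvd_factorial (by omega) (by omega)
      have h2 : Nat.factorial b = b * Nat.factorial (b - 1) := by
        conv_lhs => rw [show b = (b - 1) + 1 by omega]
        rw [Nat.factorial_succ]
        congr 1
        omega
      have h3 : a * b ∣ Nat.factorial b := by
        rw [h2, mul_comm a b]
        exact mul_dvd_mul_left _ h1
      have h4 : Nat.factorial b ∣ Nat.factorial (k - 1) :=
        Nat.factorial_dvd_factorial (by omega)
      have h5 : k ∣ a * b := by rw [← heq, ← hc]
      exact h5.trans (h3.trans h4)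
    rcases lt_or_gt_of_ne hne with h | h
    · exact key m c h hm2 hck rfl
    · exact key c m h hc2 hm3 (mul_comm m c)

/-- **Term-by-term evaluation in Laurent's formula.**
For every integer `k ≥ 5`, `(e^{2πi·(k−1)!/k} − 1)/(e^{−2πi/k} − 1)` equals `1`
if `k` is prime and `0` if `k` is not prime. -/
theorem laurent_term_eval (k : ℕ) (hk : 5 ≤ k) :
    (Complex.exp (2 * (Real.pi : ℂ) * Complex.I * ((Nat.factorial (k - 1) : ℂ) / k)) - 1) /
        (Complex.exp (-(2 * (Real.pi : ℂ) * Complex.I) / k) - 1) =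
      if Nat.Prime k then 1 else 0 := by
  have hk0 : (k : ℂ) ≠ 0 := Nat.cast_ne_zero.mpr (by omega)
  have h2pi : (2 * (Real.pi : ℂ) * Complex.I) ≠ 0 := by
    simp [Real.pi_ne_zero, Complex.I_ne_zero]
  by_cases hp : Nat.Prime k
  · rw [if_pos hp]
    haveI := Fact.mk hp
    have hw : ((Nat.factorial (k - 1) : ZMod k)) = -1 := ZMod.wilsons_lemma k
    have hdvd : (k : ℕ) ∣ Nat.factorial (k - 1) + 1 := by
      have : ((Nat.factorial (k - 1) + 1 : ℕ) : ZMod k) = 0 := by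
        push_cast
        rw [hw]; ring
      exact (ZMod.natCast_eq_zero_iff _ _).mp this
    obtain ⟨m, hm⟩ := hdvd
    have hfc : (Nat.factorial (k - 1) : ℂ) = (m : ℂ) * k - 1 := by
      have := congrArg (Nat.cast : ℕ → ℂ) hm
      push_cast at this
      linear_combination this
    have hnum : Complex.exp (2 * (Real.pi : ℂ) * Complex.I *
        ((Nat.factorial (k - 1) : ℂ) / k)) =
        Complex.exp (-(2 * (Real.pi : ℂ) * Complex.I) / k) := by
      rw [hfc]
      have harg : 2 * (Real.pi : ℂ) * Complex.I * (((m : ℂ) * k - 1) / k) =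
          (m : ℂ) * (2 * (Real.pi : ℂ) * Complex.I) +
            (-(2 * (Real.pi : ℂ) * Complex.I)) / k := by
        field_simp
        ring
      rw [harg, Complex.exp_add]
      have hme : Complex.exp ((m : ℂ) * (2 * (Real.pi : ℂ) * Complex.I)) = 1 := by
        have := Complex.exp_int_mul_two_pi_mul_I (m : ℤ)
        simpa using this
      rw [hme, one_mul]
    rw [hnum]
    apply div_self
    rw [sub_ne_zero]
    intro heq
    rw [Complex.exp_eq_one_iff] at heq
    obtain ⟨n, hn⟩ := heq
    have : (n : ℂ) * k = -1 := by
      have h1 : -(2 * (Real.pi : ℂ) * Complex.I) = (n : ℂ) * k * (2 * (Real.pi : ℂ) * Complex.I) := by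
        field_simp at hn
        linear_combination (2 * (Real.pi : ℂ) * Complex.I) * hn
      have h2 : (-1 : ℂ) * (2 * (Real.pi : ℂ) * Complex.I) =
          (n : ℂ) * k * (2 * (Real.pi : ℂ) * Complex.I) := by
        linear_combination h1
      exact (mul_right_cancel₀ h2pi h2).symm
    have hz : n * (k : ℤ) = -1 := by exact_mod_cast this
    have : (k : ℤ) ∣ 1 := ⟨-n, by linarith⟩
    have := Int.le_of_dvd one_pos this
    omega
  · rw [if_neg hp]
    obtain ⟨m, hm⟩ := composite_dvd_pred_factorial k hk hp
    have hfc : (Nat.factorial (k - 1) : ℂ) / k = (m : ℂ) := by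
      rw [hm]
      push_cast
      field_simp
    rw [hfc]
    have : Complex.exp (2 * (Real.pi : ℂ) * Complex.I * (m : ℂ)) = 1 := by
      have := Complex.exp_int_mul_two_pi_mul_I (m : ℤ)
      rw [mul_comm] at this
      simpa using this
    rw [this, sub_self, zero_div]
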